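/- Let p be a prime with p ≠ 3. For g = (α1, α2; β1, β2) an invertible 2×2 matrix over ℤ_p with determinant d, let M(g) be the linear automorphism of (ℤ_p)⁴ (standard basis e1, e2, e3, e4) with M(g)e1 = α1·e1 + α2·e2, M(g)e2 = β1·e1 + β2·e2, M(g)e3 = d·(α1·e3 + α2·e4), M(g)e4 = d·(β1·e3 + β2·e4). Fix a non-square λ ∈ ℤ_p (if p ≠ 2), and set N1 = span{e1, e3, e4}, N2 = span{e1, e2, e3}, N3 = span{e1, e2 + e4, e3}, N4 = span{e2, e1 + e4, e3}, N5 = span{e2, λ·e1 + e4, e3}. Then every 3-dimensional subspace N of (ℤ_p)⁴ satisfies N = M(g)(N_i) for some invertible g and exactly one index i ∈ {1,2,3,4,5} (with i = 5 excluded when p = 2). -/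

import Mathlib

/-- The matrix of the linear automorphism `M(g)` of `(ℤ_p)⁴` (for `p ≠ 3`) induced by
`g = (α1, α2; β1, β2) ∈ GL_2(p)` with `d = det g`: `e1 ↦ α1e1+α2e2`, `e2 ↦ β1e1+β2e2`,
`e3 ↦ d(α1e3+α2e4)`, `e4 ↦ d(β1e3+β2e4)`. -/
def glAct (p : ℕ) (α1 α2 β1 β2 : ZMod p) : Matrix (Fin 4) (Fin 4) (ZMod p) :=
  !![α1, β1, 0, 0;
     α2, β2, 0, 0;
     0, 0, (α1 * β2 - α2 * β1) * α1, (α1 * β2 - α2 * β1) * β1;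
     0, 0, (α1 * β2 - α2 * β1) * α2, (α1 * β2 - α2 * β1) * β2]

/-- The five representative subspaces `N1, …, N5` of `(ℤ_p)⁴` (for `p ≠ 3`),
depending on a fixed non-square `lam`. -/
def reps (p : ℕ) (lam : ZMod p) : Fin 5 → Submodule (ZMod p) (Fin 4 → ZMod p) :=
  ![Submodule.span (ZMod p) {Pi.single 0 1, Pi.single 2 1, Pi.single 3 1},
    Submodule.span (ZMod p) {Pi.single 0 1, Pi.single 1 1, Pi.single 2 1},
    Submodule.span (ZMod p) {Pi.single 0 1, Pi.single 1 1 + Pi.single 3 1, Pi.single 2 1},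
    Submodule.span (ZMod p) {Pi.single 1 1, Pi.single 0 1 + Pi.single 3 1, Pi.single 2 1},
    Submodule.span (ZMod p)
      {Pi.single 1 1, lam • (Pi.single 0 1 : Fin 4 → ZMod p) + Pi.single 3 1, Pi.single 2 1}]


open Matrix

attribute [local simp] Matrix.cons_val_two Matrix.cons_val_three

variable {p : ℕ}

def dotL (r : Fin 4 → ZMod p) : (Fin 4 → ZMod p) →ₗ[ZMod p] ZMod p where
  toFun x := r ⬝ᵥ x
  map_add' x y := dotProduct_add r x y
  map_smul' c x := by simp [dotProduct_smul, smul_eq_mul, mul_comm]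

lemma dotL_single (r : Fin 4 → ZMod p) (j : Fin 4) : dotL r (Pi.single j 1) = r j := by
  simp [dotL, dotProduct, Pi.single_apply, Fin.sum_univ_four]
  fin_cases j <;> simp

lemma dotL_smul_row (s : ZMod p) (r : Fin 4 → ZMod p) (x : Fin 4 → ZMod p) :
    dotL (s • r) x = s * dotL r x := by
  simp [dotL, dotProduct, Finset.mul_sum, mul_assoc]

lemma ker_eq_iff_prop [Fact p.Prime] {w r : Fin 4 → ZMod p} (hw : w ≠ 0) (hr : r ≠ 0) :
    LinearMap.ker (dotL w) = LinearMap.ker (dotL r) ↔ ∃ s : ZMod p, s ≠ 0 ∧ w = s • r := by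
  constructor
  · intro h
    obtain ⟨j, hj⟩ : ∃ j, r j ≠ 0 := by
      by_contra hc; push_neg at hc; exact hr (funext hc)
    set s : ZMod p := dotL w (Pi.single j 1) * (r j)⁻¹ with hs
    have key : w = s • r := by
      funext k
      have hker : (Pi.single k 1 : Fin 4 → ZMod p) - (r k * (r j)⁻¹) • (Pi.single j 1 : Fin 4 → ZMod p)
          ∈ LinearMap.ker (dotL r) := by
        simp only [LinearMap.mem_ker, map_sub, _root_.map_smul, smul_eq_mul, dotL_single]
        field_simp
        simp
      rw [← h, LinearMap.mem_ker, map_sub, _root_.map_smul] at hker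
      simp only [smul_eq_mul, dotL_single, sub_eq_zero] at hker
      rw [Pi.smul_apply, smul_eq_mul, hker, hs, dotL_single]; ring
    refine ⟨s, ?_, key⟩
    intro hs0
    apply hw
    rw [key, hs0, zero_smul]
  · rintro ⟨s, hs, rfl⟩
    ext y
    simp only [LinearMap.mem_ker, dotL_smul_row]
    exact ⟨fun h => by rcases mul_eq_zero.mp h with h|h; exact absurd h hs; exact h,
      fun h => by rw [h, mul_zero]⟩

lemma comap_toLin'_ker (A : Matrix (Fin 4) (Fin 4) (ZMod p)) (r : Fin 4 → ZMod p) :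
    Submodule.comap (Matrix.toLin' A) (LinearMap.ker (dotL r))
      = LinearMap.ker (dotL (vecMul r A)) := by
  ext x
  simp [Submodule.mem_comap, LinearMap.mem_ker, dotL, Matrix.toLin'_apply,
    Matrix.dotProduct_mulVec]

lemma map_eq_iff_comap {M : (Fin 4 → ZMod p) →ₗ[ZMod p] (Fin 4 → ZMod p)}
    (hM : Function.Bijective M) (N K : Submodule (ZMod p) (Fin 4 → ZMod p)) :
    N = Submodule.map M K ↔ Submodule.comap M N = K := by
  constructor
  · rintro rfl
    exact Submodule.comap_map_eq_of_injective hM.1 K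
  · rintro rfl
    exact (Submodule.map_comap_eq_of_surjective hM.2 N).symm


lemma pi_decomp (x : Fin 4 → ZMod p) :
    ∑ j : Fin 4, x j • (Pi.single j 1 : Fin 4 → ZMod p) = x := by
  funext k
  simp [Pi.single_apply, Fin.sum_univ_four]
  try (fin_cases k <;> simp)

lemma eq_dotL (f : (Fin 4 → ZMod p) →ₗ[ZMod p] ZMod p) :
    f = dotL (fun j => f (Pi.single j 1)) := by
  refine LinearMap.ext fun x => ?_
  conv_lhs => rw [← pi_decomp x]
  rw [map_sum]
  simp only [_root_.map_smul, smul_eq_mul]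
  show _ = (fun j => f (Pi.single j 1)) ⬝ᵥ x
  rw [dotProduct]
  exact Finset.sum_congr rfl fun j _ => mul_comm _ _

lemma dotL_zero : dotL (0 : Fin 4 → ZMod p) = 0 := by
  refine LinearMap.ext fun x => ?_
  simp [dotL]

lemma exists_row [Fact p.Prime] (N : Submodule (ZMod p) (Fin 4 → ZMod p))
    (hN : Module.finrank (ZMod p) N = 3) :
    ∃ r : Fin 4 → ZMod p, r ≠ 0 ∧ N = LinearMap.ker (dotL r) := by
  have hNtop : N < ⊤ := by
    rw [lt_top_iff_ne_top]
    intro hc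
    rw [hc, finrank_top] at hN
    simp [Module.finrank_pi] at hN
  obtain ⟨f, hf0, hfmap⟩ := Submodule.exists_dual_map_eq_bot_of_lt_top hNtop inferInstance
  have hNle : N ≤ LinearMap.ker f := by
    intro x hx
    rw [LinearMap.mem_ker]
    have : f x ∈ Submodule.map f N := Submodule.mem_map_of_mem hx
    rwa [hfmap, Submodule.mem_bot] at this
  have hker : Module.finrank (ZMod p) (LinearMap.ker f) ≤ 3 := by
    have hrn := LinearMap.finrank_range_add_finrank_ker f
    have h4 : Module.finrank (ZMod p) (Fin 4 → ZMod p) = 4 := by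
      simp [Module.finrank_pi]
    have hr1 : Module.finrank (ZMod p) (LinearMap.range f) ≠ 0 := by
      intro hc
      exact hf0 (LinearMap.range_eq_bot.mp (Submodule.finrank_eq_zero.mp hc))
    omega
  have hEq : N = LinearMap.ker f := Submodule.eq_of_le_of_finrank_le hNle (by omega)
  refine ⟨fun j => f (Pi.single j 1), ?_, ?_⟩
  · intro hc
    exact hf0 (by rw [eq_dotL f, hc, dotL_zero])
  · conv_lhs => rw [hEq, eq_dotL f]

lemma mem_dotL {r x : Fin 4 → ZMod p} :
    x ∈ LinearMap.ker (dotL r) ↔ r 0 * x 0 + r 1 * x 1 + r 2 * x 2 + r 3 * x 3 = 0 := by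
  simp [dotL, LinearMap.mem_ker, dotProduct, Fin.sum_univ_four]

lemma mem_span3 {v1 v2 v3 x : Fin 4 → ZMod p} (c1 c2 c3 : ZMod p)
    (h : x = c1 • v1 + c2 • v2 + c3 • v3) :
    x ∈ Submodule.span (ZMod p) {v1, v2, v3} := by
  subst h
  refine Submodule.add_mem _ (Submodule.add_mem _ ?_ ?_) ?_ <;>
    exact Submodule.smul_mem _ _ (Submodule.subset_span (by simp))


def rowOf (p : ℕ) (lam : ZMod p) : Fin 5 → (Fin 4 → ZMod p) :=
  ![![0,1,0,0], ![0,0,0,1], ![0,1,0,-1], ![1,0,0,-1], ![1,0,0,-lam]]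

lemma funext4 {x y : Fin 4 → ZMod p} (h0 : x 0 = y 0) (h1 : x 1 = y 1)
    (h2 : x 2 = y 2) (h3 : x 3 = y 3) : x = y := by
  funext i; fin_cases i <;> assumption


lemma span_le_ker {r v1 v2 v3 : Fin 4 → ZMod p} (h1 : r ⬝ᵥ v1 = 0) (h2 : r ⬝ᵥ v2 = 0)
    (h3 : r ⬝ᵥ v3 = 0) : Submodule.span (ZMod p) {v1, v2, v3} ≤ LinearMap.ker (dotL r) := by
  rw [Submodule.span_le]
  intro v hv
  rcases hv with h | h | h <;> subst h <;> simpa [dotL, LinearMap.mem_ker] using ‹_›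

lemma reps_eq_ker0 (lam : ZMod p) : reps p lam 0 = LinearMap.ker (dotL (rowOf p lam 0)) := by
  show Submodule.span (ZMod p) {Pi.single 0 1, Pi.single 2 1, Pi.single 3 1}
      = LinearMap.ker (dotL ![0,1,0,0])
  apply le_antisymm
  · exact span_le_ker (by simp [dotProduct, Fin.sum_univ_four])
      (by simp [dotProduct, Fin.sum_univ_four]) (by simp [dotProduct, Fin.sum_univ_four])
  · intro x hx
    rw [mem_dotL] at hx
    norm_num at hx
    apply mem_span3 (x 0) (x 2) (x 3)
    apply funext4 <;> simp [hx]

lemma reps_eq_ker1 (lam : ZMod p) : reps p lam 1 = LinearMap.ker (dotL (rowOf p lam 1)) := by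
  show Submodule.span (ZMod p) {Pi.single 0 1, Pi.single 1 1, Pi.single 2 1}
      = LinearMap.ker (dotL ![0,0,0,1])
  apply le_antisymm
  · exact span_le_ker (by simp [dotProduct, Fin.sum_univ_four])
      (by simp [dotProduct, Fin.sum_univ_four]) (by simp [dotProduct, Fin.sum_univ_four])
  · intro x hx
    rw [mem_dotL] at hx; norm_num at hx
    apply mem_span3 (x 0) (x 1) (x 2)
    apply funext4 <;> simp [hx]

lemma reps_eq_ker2 (lam : ZMod p) : reps p lam 2 = LinearMap.ker (dotL (rowOf p lam 2)) := by
  show Submodule.span (ZMod p) {Pi.single 0 1, Pi.single 1 1 + Pi.single 3 1, Pi.single 2 1}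
      = LinearMap.ker (dotL ![0,1,0,-1])
  apply le_antisymm
  · exact span_le_ker (by simp [dotProduct, Fin.sum_univ_four])
      (by simp [dotProduct, Fin.sum_univ_four]) (by simp [dotProduct, Fin.sum_univ_four])
  · intro x hx
    rw [mem_dotL] at hx; norm_num at hx
    apply mem_span3 (x 0) (x 1) (x 2)
    apply funext4 <;> simp [hx] <;> first | linear_combination hx | linear_combination -hx

lemma reps_eq_ker3 (lam : ZMod p) : reps p lam 3 = LinearMap.ker (dotL (rowOf p lam 3)) := by
  show Submodule.span (ZMod p) {Pi.single 1 1, Pi.single 0 1 + Pi.single 3 1, Pi.single 2 1}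
      = LinearMap.ker (dotL ![1,0,0,-1])
  apply le_antisymm
  · exact span_le_ker (by simp [dotProduct, Fin.sum_univ_four])
      (by simp [dotProduct, Fin.sum_univ_four]) (by simp [dotProduct, Fin.sum_univ_four])
  · intro x hx
    rw [mem_dotL] at hx; norm_num at hx
    apply mem_span3 (x 1) (x 3) (x 2)
    apply funext4 <;> simp [hx] <;> first | linear_combination hx | linear_combination -hx

lemma reps_eq_ker4 (lam : ZMod p) : reps p lam 4 = LinearMap.ker (dotL (rowOf p lam 4)) := by
  show Submodule.span (ZMod p)
      {Pi.single 1 1, lam • (Pi.single 0 1 : Fin 4 → ZMod p) + Pi.single 3 1, Pi.single 2 1}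
      = LinearMap.ker (dotL ![1,0,0,-lam])
  apply le_antisymm
  · exact span_le_ker (by simp [dotProduct, Fin.sum_univ_four])
      (by simp [dotProduct, Fin.sum_univ_four]; try ring) (by simp [dotProduct, Fin.sum_univ_four])
  · intro x hx
    rw [mem_dotL] at hx; norm_num at hx
    apply mem_span3 (x 1) (x 3) (x 2)
    apply funext4 <;> simp [hx] <;> first | linear_combination hx | linear_combination -hx

lemma reps_eq_ker (lam : ZMod p) (i : Fin 5) :
    reps p lam i = LinearMap.ker (dotL (rowOf p lam i)) := by
  fin_cases i
  · exact reps_eq_ker0 lam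
  · exact reps_eq_ker1 lam
  · exact reps_eq_ker2 lam
  · exact reps_eq_ker3 lam
  · exact reps_eq_ker4 lam

lemma glAct_mul_inv [Fact p.Prime] (α1 α2 β1 β2 : ZMod p) (hD : α1*β2 - α2*β1 ≠ 0) :
    glAct p α1 α2 β1 β2 *
      glAct p (β2/(α1*β2-α2*β1)) (-α2/(α1*β2-α2*β1)) (-β1/(α1*β2-α2*β1)) (α1/(α1*β2-α2*β1))
      = 1 := by
  ext i j
  fin_cases i <;> fin_cases j <;>
    (simp [glAct, Matrix.mul_apply, Fin.sum_univ_four, Matrix.one_apply, Matrix.vecHead, Matrix.vecTail]; try field_simp) <;>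
    ring

lemma glAct_inv_mul [Fact p.Prime] (α1 α2 β1 β2 : ZMod p) (hD : α1*β2 - α2*β1 ≠ 0) :
    glAct p (β2/(α1*β2-α2*β1)) (-α2/(α1*β2-α2*β1)) (-β1/(α1*β2-α2*β1)) (α1/(α1*β2-α2*β1)) *
      glAct p α1 α2 β1 β2 = 1 := by
  have hD1 : β2 * α1 - α2 * β1 ≠ 0 := by rw [mul_comm β2 α1]; exact hD
  have hD2 : -(α2 * β1) + β2 * α1 ≠ 0 := by rw [neg_add_eq_sub, mul_comm β2 α1]; exact hD
  ext i j
  fin_cases i <;> fin_cases j <;>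
    (simp [glAct, Matrix.mul_apply, Fin.sum_univ_four, Matrix.one_apply, Matrix.vecHead, Matrix.vecTail]; try field_simp) <;>
    ring

lemma vecMul_glAct (r : Fin 4 → ZMod p) (α1 α2 β1 β2 : ZMod p) :
    vecMul r (glAct p α1 α2 β1 β2) =
      ![r 0*α1 + r 1*α2, r 0*β1 + r 1*β2,
        (α1*β2-α2*β1)*(r 2*α1 + r 3*α2), (α1*β2-α2*β1)*(r 2*β1 + r 3*β2)] := by
  funext j
  fin_cases j <;>
    simp [vecMul, dotProduct, glAct, Fin.sum_univ_four, Matrix.vecHead, Matrix.vecTail] <;> ring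

lemma vec_eq_iff (r : Fin 4 → ZMod p) (α1 α2 β1 β2 s w0 w1 w2 w3 : ZMod p) :
    vecMul r (glAct p α1 α2 β1 β2) = s • ![w0,w1,w2,w3] ↔
      (r 0*α1 + r 1*α2 = s*w0 ∧ r 0*β1 + r 1*β2 = s*w1 ∧
       (α1*β2-α2*β1)*(r 2*α1 + r 3*α2) = s*w2 ∧
       (α1*β2-α2*β1)*(r 2*β1 + r 3*β2) = s*w3) := by
  rw [vecMul_glAct]
  constructor
  · intro h
    exact ⟨by simpa using congrFun h 0, by simpa using congrFun h 1,
      by simpa using congrFun h 2, by simpa using congrFun h 3⟩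
  · rintro ⟨h0, h1, h2, h3⟩
    funext j
    fin_cases j <;> simp [h0, h1, h2, h3]

open scoped Classical in
noncomputable def cls (r : Fin 4 → ZMod p) : Fin 5 :=
  if r 2 = 0 ∧ r 3 = 0 then 0
  else if r 0 = 0 ∧ r 1 = 0 then 1
  else if r 0 * r 3 - r 1 * r 2 = 0 then 2
  else if IsSquare (-(r 0 * r 3 - r 1 * r 2)) then 3
  else 4

section
variable [Fact p.Prime]

lemma det_rel (α1 α2 β1 β2 a b c d s w0 w1 w2 w3 : ZMod p)
    (h0 : a*α1 + b*α2 = s*w0) (h1 : a*β1 + b*β2 = s*w1)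
    (h2 : (α1*β2 - α2*β1)*(c*α1 + d*α2) = s*w2)
    (h3 : (α1*β2 - α2*β1)*(c*β1 + d*β2) = s*w3) :
    (α1*β2 - α2*β1)^2 * (a*d - b*c) = s^2*(w0*w3 - w1*w2) := by
  linear_combination ((α1*β2-α2*β1)*(c*β1+d*β2))*h0 + (s*w0)*h3
    - ((α1*β2-α2*β1)*(c*α1+d*α2))*h1 - (s*w1)*h2

lemma rec_a (α1 α2 β1 β2 a b s w0 w1 : ZMod p)
    (h0 : a*α1 + b*α2 = s*w0) (h1 : a*β1 + b*β2 = s*w1) :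
    a*(α1*β2 - α2*β1) = s*(w0*β2 - w1*α2) := by linear_combination β2*h0 - α2*h1

lemma rec_b (α1 α2 β1 β2 a b s w0 w1 : ZMod p)
    (h0 : a*α1 + b*α2 = s*w0) (h1 : a*β1 + b*β2 = s*w1) :
    b*(α1*β2 - α2*β1) = s*(w1*α1 - w0*β1) := by linear_combination α1*h1 - β1*h0

lemma rec_c (α1 α2 β1 β2 c d s w2 w3 : ZMod p)
    (h2 : (α1*β2 - α2*β1)*(c*α1 + d*α2) = s*w2)
    (h3 : (α1*β2 - α2*β1)*(c*β1 + d*β2) = s*w3) :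
    c*(α1*β2 - α2*β1)^2 = s*(w2*β2 - w3*α2) := by linear_combination β2*h2 - α2*h3

lemma rec_d (α1 α2 β1 β2 c d s w2 w3 : ZMod p)
    (h2 : (α1*β2 - α2*β1)*(c*α1 + d*α2) = s*w2)
    (h3 : (α1*β2 - α2*β1)*(c*β1 + d*β2) = s*w3) :
    d*(α1*β2 - α2*β1)^2 = s*(w3*α1 - w2*β1) := by linear_combination α1*h3 - β1*h2

lemma cancel2 {x k : ZMod p} (hk : k ≠ 0) (h : x * k^2 = 0) : x = 0 := by
  rcases mul_eq_zero.mp h with h | h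
  · exact h
  · exact absurd h (pow_ne_zero 2 hk)

lemma cancel1 {x k : ZMod p} (hk : k ≠ 0) (h : x * k = 0) : x = 0 := by
  rcases mul_eq_zero.mp h with h | h
  · exact h
  · exact absurd h hk

lemma isSquare_of_two (hp2 : p = 2) (x : ZMod p) : IsSquare x := by
  subst hp2
  revert x
  decide +revert

lemma classify (lam : ZMod p) (hlam : p ≠ 2 → ∀ c : ZMod p, c ^ 2 ≠ lam)
    (r : Fin 4 → ZMod p) (j : Fin 5) (α1 α2 β1 β2 s : ZMod p)
    (hD : α1*β2 - α2*β1 ≠ 0) (hs : s ≠ 0) (hj2 : p = 2 → j ≠ 4)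
    (h : vecMul r (glAct p α1 α2 β1 β2) = s • rowOf p lam j) :
    j = cls r := by
  classical
  fin_cases j
  -- j = 0
  · replace h : vecMul r (glAct p α1 α2 β1 β2) = s • ![0,1,0,0] := h
    rw [vec_eq_iff] at h
    obtain ⟨h0, h1, h2, h3⟩ := h
    have hc : r 2 = 0 := cancel2 hD (by linear_combination rec_c α1 α2 β1 β2 (r 2) (r 3) s 0 0 h2 h3)
    have hd : r 3 = 0 := cancel2 hD (by linear_combination rec_d α1 α2 β1 β2 (r 2) (r 3) s 0 0 h2 h3)
    simp [cls, hc, hd]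
  -- j = 1
  · replace h : vecMul r (glAct p α1 α2 β1 β2) = s • ![0,0,0,1] := h
    rw [vec_eq_iff] at h
    obtain ⟨h0, h1, h2, h3⟩ := h
    have ha : r 0 = 0 := cancel1 hD (by linear_combination rec_a α1 α2 β1 β2 (r 0) (r 1) s 0 0 h0 h1)
    have hb : r 1 = 0 := cancel1 hD (by linear_combination rec_b α1 α2 β1 β2 (r 0) (r 1) s 0 0 h0 h1)
    have hcd : ¬(r 2 = 0 ∧ r 3 = 0) := by
      rintro ⟨hc, hd⟩
      apply hs
      linear_combination -h3 + (α1*β2-α2*β1)*β1*hc + (α1*β2-α2*β1)*β2*hd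
    simp [cls, ha, hb, hcd]
  -- j = 2
  · replace h : vecMul r (glAct p α1 α2 β1 β2) = s • ![0,1,0,-1] := h
    rw [vec_eq_iff] at h
    obtain ⟨h0, h1, h2, h3⟩ := h
    have hcd : ¬(r 2 = 0 ∧ r 3 = 0) := by
      rintro ⟨hc, hd⟩
      apply hs
      linear_combination h3 - (α1*β2-α2*β1)*β1*hc - (α1*β2-α2*β1)*β2*hd
    have hab : ¬(r 0 = 0 ∧ r 1 = 0) := by
      rintro ⟨ha, hb⟩
      apply hs
      linear_combination -h1 + β1*ha + β2*hb
    have hdet : r 0 * r 3 - r 1 * r 2 = 0 :=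
      cancel2 hD (by linear_combination det_rel α1 α2 β1 β2 (r 0) (r 1) (r 2) (r 3) s 0 1 0 (-1) h0 h1 h2 h3)
    simp [cls, hcd, hab, hdet]
  -- j = 3
  · replace h : vecMul r (glAct p α1 α2 β1 β2) = s • ![1,0,0,-1] := h
    rw [vec_eq_iff] at h
    obtain ⟨h0, h1, h2, h3⟩ := h
    have hrel : (α1*β2 - α2*β1)^2 * (r 0 * r 3 - r 1 * r 2) = -s^2 := by
      linear_combination det_rel α1 α2 β1 β2 (r 0) (r 1) (r 2) (r 3) s 1 0 0 (-1) h0 h1 h2 h3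
    have hdet : r 0 * r 3 - r 1 * r 2 ≠ 0 := by
      intro hc
      rw [hc, mul_zero] at hrel
      exact hs (by
        have : s^2 = 0 := by linear_combination hrel
        exact pow_eq_zero_iff (n := 2) (by norm_num) |>.mp this)
    have hcd : ¬(r 2 = 0 ∧ r 3 = 0) := by
      rintro ⟨hc, hd⟩
      exact hdet (by rw [hc, hd]; ring)
    have hab : ¬(r 0 = 0 ∧ r 1 = 0) := by
      rintro ⟨ha, hb⟩
      exact hdet (by rw [ha, hb]; ring)
    have hsq : IsSquare (r 1 * r 2 - r 0 * r 3) := by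
      refine ⟨s * (α1*β2 - α2*β1)⁻¹, ?_⟩
      field_simp
      linear_combination -hrel
    simp [cls, hcd, hab, hdet, hsq]
  -- j = 4
  · have hp2 : p ≠ 2 := by
      intro hc
      exact hj2 hc rfl
    replace h : vecMul r (glAct p α1 α2 β1 β2) = s • ![1,0,0,-lam] := h
    rw [vec_eq_iff] at h
    obtain ⟨h0, h1, h2, h3⟩ := h
    have hlam' := hlam hp2
    have hlam0 : lam ≠ 0 := fun hc => hlam' 0 (by rw [hc]; ring)
    have hrel : (α1*β2 - α2*β1)^2 * (r 0 * r 3 - r 1 * r 2) = -(s^2*lam) := by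
      linear_combination det_rel α1 α2 β1 β2 (r 0) (r 1) (r 2) (r 3) s 1 0 0 (-lam) h0 h1 h2 h3
    have hdet : r 0 * r 3 - r 1 * r 2 ≠ 0 := by
      intro hc
      rw [hc, mul_zero] at hrel
      have hs2 : s^2*lam = 0 := by linear_combination hrel
      rcases mul_eq_zero.mp hs2 with h' | h'
      · exact hs (pow_eq_zero_iff (n := 2) (by norm_num) |>.mp h')
      · exact hlam0 h'
    have hcd : ¬(r 2 = 0 ∧ r 3 = 0) := by
      rintro ⟨hc, hd⟩
      exact hdet (by rw [hc, hd]; ring)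
    have hab : ¬(r 0 = 0 ∧ r 1 = 0) := by
      rintro ⟨ha, hb⟩
      exact hdet (by rw [ha, hb]; ring)
    have hnsq : ¬IsSquare (r 1 * r 2 - r 0 * r 3) := by
      rintro ⟨t, ht⟩
      apply hlam' ((α1*β2 - α2*β1) * t * s⁻¹)
      field_simp
      linear_combination (-(α1*β2-α2*β1)^2)*ht - hrel
    simp [cls, hcd, hab, hdet, hnsq]



lemma isSquare_mul_of_not_of_not [Fact p.Prime] (x y : ZMod p) (hx : x ≠ 0) (hy : y ≠ 0)
    (h1 : ¬IsSquare x) (h2 : ¬IsSquare y) : IsSquare (x*y) := by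
  have c1 := quadraticChar_neg_one_iff_not_isSquare.mpr h1
  have c2 := quadraticChar_neg_one_iff_not_isSquare.mpr h2
  have h : quadraticChar (ZMod p) (x*y) = 1 := by rw [_root_.map_mul, c1, c2]; ring
  exact (quadraticChar_one_iff_isSquare (mul_ne_zero hx hy)).mp h

lemma r_cases {r : Fin 4 → ZMod p} (hr : r ≠ 0) :
    ¬(r 0 = 0 ∧ r 1 = 0 ∧ r 2 = 0 ∧ r 3 = 0) := by
  rintro ⟨h0, h1, h2, h3⟩
  apply hr
  funext k
  fin_cases k <;> simp [h0, h1, h2, h3]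


lemma exists_glAct (lam : ZMod p) (hlam : p ≠ 2 → ∀ c : ZMod p, c ^ 2 ≠ lam)
    (r : Fin 4 → ZMod p) (hr : r ≠ 0) :
    (p = 2 → cls r ≠ 4) ∧ ∃ α1 α2 β1 β2 : ZMod p, (α1*β2 - α2*β1 ≠ 0) ∧
      ∃ s : ZMod p, s ≠ 0 ∧ vecMul r (glAct p α1 α2 β1 β2) = s • rowOf p lam (cls r) := by
  classical
  by_cases hcd : r 2 = 0 ∧ r 3 = 0
  · have hcls : cls r = 0 := by simp [cls, hcd]
    rw [hcls]
    refine ⟨fun _ => by decide, ?_⟩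
    obtain ⟨hc, hd⟩ := hcd
    by_cases ha : r 0 = 0
    · have hb : r 1 ≠ 0 := fun hb => r_cases hr ⟨ha, hb, hc, hd⟩
      refine ⟨1, 0, 0, (r 1)⁻¹, by simpa using inv_ne_zero hb, 1, one_ne_zero, ?_⟩
      show vecMul r (glAct p 1 0 0 (r 1)⁻¹) = (1 : ZMod p) • ![0,1,0,0]
      rw [vec_eq_iff]
      refine ⟨by simp [ha], by field_simp; simp, by simp [hc, hd]; try ring, by simp [hc, hd]; try ring⟩
    · refine ⟨-(r 1), r 0, (r 0)⁻¹, 0, by simp [mul_inv_cancel₀ ha], 1, one_ne_zero, ?_⟩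
      show vecMul r (glAct p (-(r 1)) (r 0) ((r 0)⁻¹) 0) = (1 : ZMod p) • ![0,1,0,0]
      rw [vec_eq_iff]
      refine ⟨by ring, by field_simp; simp, by simp [hc, hd]; try ring, by simp [hc, hd]; try ring⟩
  · by_cases hab : r 0 = 0 ∧ r 1 = 0
    · have hcls : cls r = 1 := by simp [cls, hcd, hab]
      rw [hcls]
      refine ⟨fun _ => by decide, ?_⟩
      obtain ⟨ha, hb⟩ := hab
      by_cases hc : r 2 = 0
      · have hd : r 3 ≠ 0 := fun hd => hcd ⟨hc, hd⟩
        refine ⟨1, 0, 0, (r 3)⁻¹, by simpa using inv_ne_zero hd, (r 3)⁻¹,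
          inv_ne_zero hd, ?_⟩
        show vecMul r (glAct p 1 0 0 (r 3)⁻¹) = (r 3)⁻¹ • ![0,0,0,1]
        rw [vec_eq_iff]
        refine ⟨by simp [ha, hb], by simp [ha, hb], by simp [hc]; try ring, by field_simp; try ring⟩
      · refine ⟨-(r 3), r 2, (r 2)⁻¹, 0, by simp [mul_inv_cancel₀ hc], -1, by simp, ?_⟩
        show vecMul r (glAct p (-(r 3)) (r 2) ((r 2)⁻¹) 0) = (-1 : ZMod p) • ![0,0,0,1]
        rw [vec_eq_iff]
        refine ⟨by simp [ha, hb], by simp [ha, hb], by ring, by field_simp; try ring⟩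
    · by_cases hdet : r 0 * r 3 - r 1 * r 2 = 0
      · have hcls : cls r = 2 := by simp [cls, hcd, hab, hdet]
        rw [hcls]
        refine ⟨fun _ => by decide, ?_⟩
        by_cases ha : r 0 = 0
        · have hb : r 1 ≠ 0 := fun hb => hab ⟨ha, hb⟩
          have hc : r 2 = 0 := by
            have h' : r 1 * r 2 = 0 := by linear_combination -hdet + r 3 * ha
            exact (mul_eq_zero.mp h').resolve_left hb
          have hd : r 3 ≠ 0 := fun hd => hcd ⟨hc, hd⟩
          refine ⟨1, 0, 0, -(r 1) * (r 3)⁻¹, by simpa using ⟨hb, hd⟩,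
            -((r 1)^2) * (r 3)⁻¹, by simpa using ⟨hb, hd⟩, ?_⟩
          show vecMul r (glAct p 1 0 0 (-(r 1) * (r 3)⁻¹))
              = (-((r 1)^2) * (r 3)⁻¹) • ![0,1,0,-1]
          rw [vec_eq_iff]
          refine ⟨by simp [ha], by ring, by simp [hc]; try ring, by field_simp; try ring⟩
        · have hc : r 2 ≠ 0 := by
            intro hc
            have h' : r 0 * r 3 = 0 := by linear_combination hdet + r 1 * hc
            rcases mul_eq_zero.mp h' with h | h
            · exact ha h
            · exact hcd ⟨hc, h⟩
          refine ⟨-(r 1), r 0, (r 2)⁻¹, 0,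
            by simpa using mul_ne_zero ha (inv_ne_zero hc),
            r 0 * (r 2)⁻¹, mul_ne_zero ha (inv_ne_zero hc), ?_⟩
          show vecMul r (glAct p (-(r 1)) (r 0) ((r 2)⁻¹) 0)
              = (r 0 * (r 2)⁻¹) • ![0,1,0,-1]
          rw [vec_eq_iff]
          have hinv : r 2 * (r 2)⁻¹ = 1 := mul_inv_cancel₀ hc
          refine ⟨by ring, by ring, ?_, ?_⟩
          · linear_combination (-(r 0)*(r 2)⁻¹) * hdet
          · linear_combination (-(r 0)*(r 2)⁻¹) * hinv
      · have hD0 : r 1 * r 2 - r 0 * r 3 ≠ 0 := fun h => hdet (by linear_combination -h)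
        have hΔ : (r 0 * r 3 - r 1 * r 2) * (r 0 * r 3 - r 1 * r 2)⁻¹ = 1 :=
          mul_inv_cancel₀ hdet
        by_cases hsq : IsSquare (r 1 * r 2 - r 0 * r 3)
        · have hcls : cls r = 3 := by simp [cls, hcd, hab, hdet, hsq]
          rw [hcls]
          refine ⟨fun _ => by decide, ?_⟩
          obtain ⟨e, he⟩ := hsq
          have he0 : e ≠ 0 := by
            intro h; rw [h] at he; simp at he; exact hD0 he
          refine ⟨r 3 * (r 0 * r 3 - r 1 * r 2)⁻¹, -(r 2) * (r 0 * r 3 - r 1 * r 2)⁻¹,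
            -(r 1) * (e * (r 0 * r 3 - r 1 * r 2)⁻¹), r 0 * (e * (r 0 * r 3 - r 1 * r 2)⁻¹),
            ?_, 1, one_ne_zero, ?_⟩
          · have hk : r 3 * (r 0 * r 3 - r 1 * r 2)⁻¹ * (r 0 * (e * (r 0 * r 3 - r 1 * r 2)⁻¹))
                - -(r 2) * (r 0 * r 3 - r 1 * r 2)⁻¹ * (-(r 1) * (e * (r 0 * r 3 - r 1 * r 2)⁻¹))
                = e * (r 0 * r 3 - r 1 * r 2)⁻¹ := by
              linear_combination (e * (r 0 * r 3 - r 1 * r 2)⁻¹) * hΔ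
            rw [hk]
            exact mul_ne_zero he0 (inv_ne_zero hdet)
          show vecMul r (glAct p (r 3 * (r 0 * r 3 - r 1 * r 2)⁻¹)
              (-(r 2) * (r 0 * r 3 - r 1 * r 2)⁻¹)
              (-(r 1) * (e * (r 0 * r 3 - r 1 * r 2)⁻¹))
              (r 0 * (e * (r 0 * r 3 - r 1 * r 2)⁻¹)))
              = (1 : ZMod p) • ![1,0,0,-1]
          rw [vec_eq_iff]
          refine ⟨by linear_combination hΔ, by ring, by ring, ?_⟩
          · linear_combination
              (-(((r 0 * r 3 - r 1 * r 2)⁻¹)^3 * (r 0 * r 3 - r 1 * r 2)^2)) * he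
              - (1 + (r 0 * r 3 - r 1 * r 2) * (r 0 * r 3 - r 1 * r 2)⁻¹
                + (r 0 * r 3 - r 1 * r 2)^2 * ((r 0 * r 3 - r 1 * r 2)⁻¹)^2) * hΔ
        · have hcls : cls r = 4 := by simp [cls, hcd, hab, hdet, hsq]
          rw [hcls]
          have hp2 : p ≠ 2 := fun h2 => hsq (isSquare_of_two h2 _)
          have hlam' := hlam hp2
          have hlam0 : lam ≠ 0 := fun h => hlam' 0 (by rw [h]; ring)
          have hnsqlam : ¬IsSquare lam := by
            rintro ⟨c, hcc⟩
            exact hlam' c (by rw [hcc]; ring)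
          obtain ⟨f, hf⟩ := isSquare_mul_of_not_of_not _ lam hD0 hlam0 hsq hnsqlam
          have hf0 : f ≠ 0 := by
            intro h; rw [h] at hf; simp at hf
            rcases hf with h' | h'
            · exact hD0 h'
            · exact hlam0 h'
          refine ⟨fun h2 => absurd h2 hp2, ?_⟩
          refine ⟨r 3 * (r 0 * r 3 - r 1 * r 2)⁻¹, -(r 2) * (r 0 * r 3 - r 1 * r 2)⁻¹,
            -(r 1) * (f * (r 0 * r 3 - r 1 * r 2)⁻¹), r 0 * (f * (r 0 * r 3 - r 1 * r 2)⁻¹),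
            ?_, 1, one_ne_zero, ?_⟩
          · have hk : r 3 * (r 0 * r 3 - r 1 * r 2)⁻¹ * (r 0 * (f * (r 0 * r 3 - r 1 * r 2)⁻¹))
                - -(r 2) * (r 0 * r 3 - r 1 * r 2)⁻¹ * (-(r 1) * (f * (r 0 * r 3 - r 1 * r 2)⁻¹))
                = f * (r 0 * r 3 - r 1 * r 2)⁻¹ := by
              linear_combination (f * (r 0 * r 3 - r 1 * r 2)⁻¹) * hΔ
            rw [hk]
            exact mul_ne_zero hf0 (inv_ne_zero hdet)
          show vecMul r (glAct p (r 3 * (r 0 * r 3 - r 1 * r 2)⁻¹)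
              (-(r 2) * (r 0 * r 3 - r 1 * r 2)⁻¹)
              (-(r 1) * (f * (r 0 * r 3 - r 1 * r 2)⁻¹))
              (r 0 * (f * (r 0 * r 3 - r 1 * r 2)⁻¹)))
              = (1 : ZMod p) • ![1,0,0,-lam]
          rw [vec_eq_iff]
          refine ⟨by linear_combination hΔ, by ring, by ring, ?_⟩
          · linear_combination
              (-(((r 0 * r 3 - r 1 * r 2)⁻¹)^3 * (r 0 * r 3 - r 1 * r 2)^2)) * hf
              - lam * (1 + (r 0 * r 3 - r 1 * r 2) * (r 0 * r 3 - r 1 * r 2)⁻¹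
                + (r 0 * r 3 - r 1 * r 2)^2 * ((r 0 * r 3 - r 1 * r 2)⁻¹)^2) * hΔ


lemma rowOf_ne_zero [Fact p.Prime] (lam : ZMod p) (i : Fin 5) : rowOf p lam i ≠ 0 := by
  fin_cases i <;> intro h
  · exact one_ne_zero (show (1 : ZMod p) = 0 from congrFun h 1)
  · exact one_ne_zero (show (1 : ZMod p) = 0 from congrFun h 3)
  · exact one_ne_zero (show (1 : ZMod p) = 0 from congrFun h 1)
  · exact one_ne_zero (show (1 : ZMod p) = 0 from congrFun h 0)
  · exact one_ne_zero (show (1 : ZMod p) = 0 from congrFun h 0)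

lemma toLin'_glAct_bijective [Fact p.Prime] (α1 α2 β1 β2 : ZMod p)
    (hD : α1*β2 - α2*β1 ≠ 0) :
    Function.Bijective (Matrix.toLin' (glAct p α1 α2 β1 β2)) := by
  set A := glAct p α1 α2 β1 β2 with hA
  set B := glAct p (β2/(α1*β2-α2*β1)) (-α2/(α1*β2-α2*β1)) (-β1/(α1*β2-α2*β1))
    (α1/(α1*β2-α2*β1)) with hB
  have h1 : A * B = 1 := glAct_mul_inv α1 α2 β1 β2 hD
  have h2 : B * A = 1 := glAct_inv_mul α1 α2 β1 β2 hD
  have hleft : ∀ z, Matrix.toLin' B (Matrix.toLin' A z) = z := fun z => by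
    rw [← Matrix.toLin'_mul_apply, h2, Matrix.toLin'_one, LinearMap.id_apply]
  constructor
  · intro x y hxy
    rw [← hleft x, ← hleft y, hxy]
  · intro y
    exact ⟨Matrix.toLin' B y,
      by rw [← Matrix.toLin'_mul_apply, h1, Matrix.toLin'_one, LinearMap.id_apply]⟩

lemma vecMul_glAct_ne_zero [Fact p.Prime] {r : Fin 4 → ZMod p} (hr : r ≠ 0)
    (α1 α2 β1 β2 : ZMod p) (hD : α1*β2 - α2*β1 ≠ 0) :
    vecMul r (glAct p α1 α2 β1 β2) ≠ 0 := by
  intro h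
  apply hr
  have h1 : glAct p α1 α2 β1 β2 * glAct p (β2/(α1*β2-α2*β1)) (-α2/(α1*β2-α2*β1))
      (-β1/(α1*β2-α2*β1)) (α1/(α1*β2-α2*β1)) = 1 := glAct_mul_inv α1 α2 β1 β2 hD
  have := congrArg (fun v => vecMul v (glAct p (β2/(α1*β2-α2*β1)) (-α2/(α1*β2-α2*β1))
      (-β1/(α1*β2-α2*β1)) (α1/(α1*β2-α2*β1)))) h
  simpa [Matrix.vecMul_vecMul, h1, Matrix.vecMul_one, Matrix.zero_vecMul] using this

lemma bridge [Fact p.Prime] (lam : ZMod p) (N : Submodule (ZMod p) (Fin 4 → ZMod p))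
    (r : Fin 4 → ZMod p) (hr : r ≠ 0) (hN : N = LinearMap.ker (dotL r))
    (i : Fin 5) (α1 α2 β1 β2 : ZMod p) (hD : α1*β2 - α2*β1 ≠ 0) :
    N = Submodule.map (Matrix.toLin' (glAct p α1 α2 β1 β2)) (reps p lam i)
      ↔ ∃ s : ZMod p, s ≠ 0 ∧ vecMul r (glAct p α1 α2 β1 β2) = s • rowOf p lam i := by
  rw [map_eq_iff_comap (toLin'_glAct_bijective α1 α2 β1 β2 hD), hN, comap_toLin'_ker,
    reps_eq_ker lam i]
  exact ker_eq_iff_prop (vecMul_glAct_ne_zero hr α1 α2 β1 β2 hD) (rowOf_ne_zero lam i)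

/-- For a prime `p ≠ 3`, every 3-dimensional subspace of `(ℤ_p)⁴` lies in the orbit of
exactly one of `N1, …, N5` (`N5` excluded when `p = 2`) under the induced `GL_2(p)`-action. -/
theorem stmt_16 (p : ℕ) (hp : p.Prime) (hp3 : p ≠ 3)
    (lam : ZMod p) (hlam : p ≠ 2 → ∀ c : ZMod p, c ^ 2 ≠ lam) :
    ∀ N : Submodule (ZMod p) (Fin 4 → ZMod p),
      Module.finrank (ZMod p) N = 3 →
      ∃! i : Fin 5, (p = 2 → i ≠ 4) ∧
        ∃ α1 α2 β1 β2 : ZMod p, α1 * β2 - α2 * β1 ≠ 0 ∧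
          N = Submodule.map (Matrix.toLin' (glAct p α1 α2 β1 β2)) (reps p lam i) := by
  haveI : Fact p.Prime := ⟨hp⟩
  intro N hN3
  obtain ⟨r, hr, hNr⟩ := exists_row N hN3
  obtain ⟨hcls2, α1, α2, β1, β2, hD, s, hs, heq⟩ := exists_glAct lam hlam r hr
  refine ⟨cls r, ⟨hcls2, α1, α2, β1, β2, hD,
    (bridge lam N r hr hNr (cls r) α1 α2 β1 β2 hD).mpr ⟨s, hs, heq⟩⟩, ?_⟩
  rintro j ⟨hj2, γ1, γ2, δ1, δ2, hD', hmap⟩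
  obtain ⟨t, ht, heq'⟩ := (bridge lam N r hr hNr j γ1 γ2 δ1 δ2 hD').mp hmap
  exact classify lam hlam r j γ1 γ2 δ1 δ2 t hD' ht hj2 heq'
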